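/- Let G, H : ℝ^n → ℝ^m be continuous, let S = {x ∈ ℝ^n : G(x) ≥ 0, H(x) ≥ 0, G(x)ᵀH(x) = 0} and, for σ > 0, S_σ = {x ∈ ℝ^n : G(x) ≥ 0, H(x) ≥ 0, G(x)ᵀH(x) ≤ σ}. Let ν > 0, let {σ_k} be a sequence of positive numbers with σ_k → 0, and for each k let x_k be a global minimizer of Φ_ν over S_{σ_k}. If x_k → x*, then x* ∈ S and Φ_ν(x*) ≤ Φ_ν(y) for every y ∈ S; that is, x* is a global minimizer of Φ_ν over S. -/

import Mathlib

open scoped BigOperators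

/-- Capped-ℓ1 surrogate `Φ_ν(x) = ∑ᵢ min{1, |xᵢ|/ν}`. -/
noncomputable def Phi {n : ℕ} (ν : ℝ) (x : Fin n → ℝ) : ℝ :=
  ∑ i, min 1 (|x i| / ν)

lemma phi_cont {n : ℕ} (ν : ℝ) : Continuous (Phi (n := n) ν) := by
  unfold Phi
  exact continuous_finset_sum _ fun i _ =>
    continuous_const.min (by fun_prop)

theorem stmt_1 {n m : ℕ}
    (G H : (Fin n → ℝ) → Fin m → ℝ)
    (hG : Continuous G) (hH : Continuous H)
    (S : Set (Fin n → ℝ))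
    (hS : S = {x | (∀ i, 0 ≤ G x i) ∧ (∀ i, 0 ≤ H x i) ∧ ∑ i, G x i * H x i = 0})
    (Sσ : ℝ → Set (Fin n → ℝ))
    (hSσ : ∀ σ, Sσ σ = {x | (∀ i, 0 ≤ G x i) ∧ (∀ i, 0 ≤ H x i) ∧ ∑ i, G x i * H x i ≤ σ})
    (ν : ℝ) (hν : 0 < ν)
    (σ : ℕ → ℝ) (hσpos : ∀ k, 0 < σ k)
    (hσ0 : Filter.Tendsto σ Filter.atTop (nhds 0))
    (x : ℕ → (Fin n → ℝ))
    (hxmem : ∀ k, x k ∈ Sσ (σ k))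
    (hxmin : ∀ k, ∀ y ∈ Sσ (σ k), Phi ν (x k) ≤ Phi ν y)
    (xstar : Fin n → ℝ)
    (hconv : Filter.Tendsto x Filter.atTop (nhds xstar)) :
    xstar ∈ S ∧ ∀ y ∈ S, Phi ν xstar ≤ Phi ν y := by
  simp only [hSσ, Set.mem_setOf_eq] at hxmem
  -- limits of components
  have hGconv : ∀ i, Filter.Tendsto (fun k => G (x k) i) Filter.atTop (nhds (G xstar i)) :=
    fun i => ((continuous_apply i).comp hG).continuousAt.tendsto.comp hconv
  have hHconv : ∀ i, Filter.Tendsto (fun k => H (x k) i) Filter.atTop (nhds (H xstar i)) :=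
    fun i => ((continuous_apply i).comp hH).continuousAt.tendsto.comp hconv
  have hGpos : ∀ i, 0 ≤ G xstar i := fun i =>
    le_of_tendsto_of_tendsto' tendsto_const_nhds (hGconv i) (fun k => (hxmem k).1 i)
  have hHpos : ∀ i, 0 ≤ H xstar i := fun i =>
    le_of_tendsto_of_tendsto' tendsto_const_nhds (hHconv i) (fun k => (hxmem k).2.1 i)
  have hsumconv : Filter.Tendsto (fun k => ∑ i, G (x k) i * H (x k) i) Filter.atTop
      (nhds (∑ i, G xstar i * H xstar i)) :=
    tendsto_finset_sum _ fun i _ => (hGconv i).mul (hHconv i)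
  have hsum0 : ∑ i, G xstar i * H xstar i = 0 := by
    have hle : ∑ i, G xstar i * H xstar i ≤ 0 :=
      le_of_tendsto_of_tendsto' hsumconv hσ0 (fun k => (hxmem k).2.2)
    have hge : 0 ≤ ∑ i, G xstar i * H xstar i :=
      Finset.sum_nonneg fun i _ => mul_nonneg (hGpos i) (hHpos i)
    linarith
  have hxstarS : xstar ∈ S := by
    rw [hS]; exact ⟨hGpos, hHpos, hsum0⟩
  refine ⟨hxstarS, fun y hy => ?_⟩
  rw [hS] at hy
  have hyk : ∀ k, y ∈ Sσ (σ k) := fun k => by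
    rw [hSσ]; exact ⟨hy.1, hy.2.1, hy.2.2 ▸ (hσpos k).le⟩
  have hPhiconv : Filter.Tendsto (fun k => Phi ν (x k)) Filter.atTop (nhds (Phi ν xstar)) :=
    (phi_cont ν).continuousAt.tendsto.comp hconv
  exact le_of_tendsto_of_tendsto' hPhiconv tendsto_const_nhds
    (fun k => hxmin k y (hyk k))
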